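/- Any finitely generated submonoid of ℤ^r consisting of elements that are ≥ 0 for the graded lexicographic order, equipped with the graded lexicographic order, is a well-ordered set. -/

import Mathlib

/-- Lexicographic strict order on `ℤ^r`. -/
def finsuppLexLtZ {r : ℕ} (a b : Fin r →₀ ℤ) : Prop :=
  ∃ i : Fin r, (∀ j : Fin r, j < i → a j = b j) ∧ a i < b i

/-- Graded lexicographic strict order on `ℤ^r`: compare the sums of the coordinates
first, then lexicographically. -/
def grlexLtZ {r : ℕ} (a b : Fin r →₀ ℤ) : Prop :=
  (∑ i, a i) < (∑ i, b i) ∨ ((∑ i, a i) = (∑ i, b i) ∧ finsuppLexLtZ a b)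

lemma finsuppLexLtZ_trans {r : ℕ} {a b c : Fin r →₀ ℤ}
    (h1 : finsuppLexLtZ a b) (h2 : finsuppLexLtZ b c) : finsuppLexLtZ a c := by
  obtain ⟨i, hi, hlt⟩ := h1
  obtain ⟨i', hi', hlt'⟩ := h2
  rcases lt_trichotomy i i' with h | h | h
  · exact ⟨i, fun j hj => (hi j hj).trans (hi' j (hj.trans h)), by
      have := hi' i h; omega⟩
  · subst h
    exact ⟨i, fun j hj => (hi j hj).trans (hi' j hj), by omega⟩
  · exact ⟨i', fun j hj => (hi j (hj.trans h)).trans (hi' j hj), by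
      have := hi i' h; omega⟩

lemma grlexLtZ_trans {r : ℕ} {a b c : Fin r →₀ ℤ}
    (h1 : grlexLtZ a b) (h2 : grlexLtZ b c) : grlexLtZ a c := by
  obtain h1 | ⟨hs1, hl1⟩ := h1 <;> obtain h2 | ⟨hs2, hl2⟩ := h2
  · exact Or.inl (h1.trans h2)
  · exact Or.inl (hs2 ▸ h1)
  · exact Or.inl (hs1 ▸ h2)
  · exact Or.inr ⟨hs1.trans hs2, finsuppLexLtZ_trans hl1 hl2⟩

lemma grlexLtZ_irrefl {r : ℕ} (a : Fin r →₀ ℤ) : ¬ grlexLtZ a a := by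
  rintro (h | ⟨-, i, -, hlt⟩)
  · omega
  · omega

instance grlexLtZ_isStrictOrder {r : ℕ} : IsStrictOrder (Fin r →₀ ℤ) grlexLtZ where
  irrefl := grlexLtZ_irrefl
  trans := fun _ _ _ => grlexLtZ_trans

lemma grlexLtZ_add_right {r : ℕ} {a b : Fin r →₀ ℤ} (h : grlexLtZ a b) (c : Fin r →₀ ℤ) :
    grlexLtZ (a + c) (b + c) := by
  have hsum : ∀ x y : Fin r →₀ ℤ, (∑ i, (x + y) i) = (∑ i, x i) + (∑ i, y i) := by
    intro x y
    simp [Finsupp.add_apply, Finset.sum_add_distrib]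
  obtain h | ⟨hs, i, hi, hlt⟩ := h
  · left; rw [hsum, hsum]; omega
  · right
    refine ⟨by rw [hsum, hsum]; omega, i, fun j hj => ?_, ?_⟩
    · simp [Finsupp.add_apply, hi j hj]
    · simp only [Finsupp.add_apply]; omega

/-- Any finitely generated submonoid of `ℤ^r` all of whose elements are `≥ 0` for the
graded lexicographic order is well-ordered by the graded lexicographic order (every
nonempty subset has a minimal, hence least, element). -/
theorem fg_submonoid_grlex_wellOrdered (r : ℕ) (S : AddSubmonoid (Fin r →₀ ℤ))
    (hfg : S.FG) (hpos : ∀ s ∈ S, s = 0 ∨ grlexLtZ 0 s) :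
    (S : Set (Fin r →₀ ℤ)).WellFoundedOn grlexLtZ := by
  obtain ⟨T, hT⟩ := hfg
  rw [Set.wellFoundedOn_iff_no_descending_seq]
  intro f hf
  -- every element of S is a ℕ-combination of the generators
  have hrep : ∀ x ∈ S, ∃ c : {g // g ∈ T} →₀ ℕ,
      x = ∑ g : {g // g ∈ T}, c g • (g : Fin r →₀ ℤ) := by
    intro x hx
    rw [← hT] at hx
    induction hx using AddSubmonoid.closure_induction with
    | mem g hg =>
      refine ⟨Finsupp.single ⟨g, hg⟩ 1, ?_⟩
      rw [Finset.sum_eq_single (⟨g, hg⟩ : {g // g ∈ T})]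
      · simp
      · intro b _ hb
        simp [Finsupp.single_apply, Ne.symm hb]
      · simp
    | zero => exact ⟨0, by simp⟩
    | add x y hx hy ihx ihy =>
      obtain ⟨cx, hcx⟩ := ihx
      obtain ⟨cy, hcy⟩ := ihy
      refine ⟨cx + cy, ?_⟩
      rw [hcx, hcy, ← Finset.sum_add_distrib]
      exact Finset.sum_congr rfl fun g _ => by simp [add_nsmul]
  choose c hc using fun n => hrep (f n) (hf n)
  obtain ⟨m, n, hmn, hle⟩ :=
    wellQuasiOrdered_le c
  have hle' : ∀ g, c m g ≤ c n g := fun g => Finsupp.le_def.mp hle g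
  set extra : Fin r →₀ ℤ := ∑ g : {g // g ∈ T}, (c n g - c m g) • (g : Fin r →₀ ℤ) with hextra
  have hextraS : extra ∈ S :=
    AddSubmonoid.sum_mem S fun g _ =>
      AddSubmonoid.nsmul_mem S (hT ▸ AddSubmonoid.subset_closure g.2) _
  have heq : f n = f m + extra := by
    rw [hc n, hc m, hextra, ← Finset.sum_add_distrib]
    refine Finset.sum_congr rfl fun g _ => ?_
    rw [← add_nsmul]
    congr 1
    have := hle' g
    omega
  have hdesc : grlexLtZ (f n) (f m) := f.map_rel_iff.mpr hmn
  rcases hpos extra hextraS with h0 | hlt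
  · rw [heq, h0, add_zero] at hdesc
    exact grlexLtZ_irrefl _ hdesc
  · have := grlexLtZ_add_right hlt (f m)
    rw [zero_add, add_comm, ← heq] at this
    exact grlexLtZ_irrefl _ (grlexLtZ_trans hdesc this)
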